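/- Let 0 ≤ a ≤ b and t > 0 with t(b-a) ≥ 1, and let h_t(λ) = (t/√π)∫_a^b exp(-t²(λ-ρ)²) dρ. Then inf_{λ ∈ [a,b]} h_t(λ) ≥ 1/2 - e^{-1}/(2√π) > 1/3. -/

import Mathlib

open Real MeasureTheory intervalIntegral

lemma cont_gauss : Continuous (fun u : ℝ => Real.exp (-u ^ 2)) := by
  continuity

lemma intble (a b : ℝ) : IntervalIntegrable (fun u : ℝ => Real.exp (-u ^ 2)) volume a b :=
  cont_gauss.intervalIntegrable a b

lemma gauss_Ioi0 : ∫ x in Set.Ioi (0:ℝ), Real.exp (-x ^ 2) = Real.sqrt π / 2 := by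
  have := integral_gaussian_Ioi 1
  simpa using this

lemma gauss_integrable : IntegrableOn (fun u : ℝ => Real.exp (-u ^ 2)) (Set.Ioi (0:ℝ)) := by
  have : Integrable (fun u : ℝ => Real.exp (-1 * u ^ 2)) := integrable_exp_neg_mul_sq one_pos
  simpa using this.integrableOn

lemma mulgauss_integrable : IntegrableOn (fun u : ℝ => u * Real.exp (-u ^ 2)) (Set.Ioi (1:ℝ)) := by
  have : Integrable (fun u : ℝ => u * Real.exp (-1 * u ^ 2)) := integrable_mul_exp_neg_mul_sq one_pos
  have := this.integrableOn (s := Set.Ioi (1:ℝ))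
  simpa using this

lemma tail_bound : ∫ x in Set.Ioi (1:ℝ), Real.exp (-x ^ 2) ≤ Real.exp (-1) / 2 := by
  have key : ∫ x in Set.Ioi (1:ℝ), x * Real.exp (-x ^ 2) = Real.exp (-1) / 2 := by
    have h := integral_Ioi_of_hasDerivAt_of_tendsto (f := fun x : ℝ => -Real.exp (-x ^ 2) / 2)
      (f' := fun x : ℝ => x * Real.exp (-x ^ 2)) (a := 1) (m := 0)
      ?_ ?_ ?_ ?_
    · rw [h]; simp [neg_div]
    · exact (Continuous.continuousWithinAt (by continuity))
    · intro x hx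
      have h1 : HasDerivAt (fun x : ℝ => -x ^ 2) (-(2 * x)) x := by
        simpa using ((hasDerivAt_pow 2 x).fun_neg)
      have h2 : HasDerivAt (fun x : ℝ => Real.exp (-x ^ 2)) (Real.exp (-x ^ 2) * -(2 * x)) x :=
        h1.exp
      have := (h2.fun_neg.div_const 2)
      convert this using 1
      · rfl
      ring
    · exact mulgauss_integrable
    · have : Filter.Tendsto (fun x : ℝ => Real.exp (-x ^ 2)) Filter.atTop (nhds 0) := by
        have h := Real.tendsto_exp_atBot
        apply h.comp
        have : Filter.Tendsto (fun x : ℝ => x ^ 2) Filter.atTop Filter.atTop :=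
          Filter.tendsto_pow_atTop two_ne_zero
        exact Filter.tendsto_neg_atBot_iff.mpr this
      have := ((this.neg).div_const 2)
      simpa using this
  calc ∫ x in Set.Ioi (1:ℝ), Real.exp (-x ^ 2)
      ≤ ∫ x in Set.Ioi (1:ℝ), x * Real.exp (-x ^ 2) := by
        apply setIntegral_mono_on
          (gauss_integrable.mono_set (Set.Ioi_subset_Ioi zero_le_one))
          mulgauss_integrable measurableSet_Ioi
        intro x hx
        nlinarith [Real.exp_pos (-x ^ 2), (Set.mem_Ioi.mp hx)]
    _ = Real.exp (-1) / 2 := key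

lemma F01 : Real.sqrt π / 2 - Real.exp (-1) / 2 ≤ ∫ u in (0:ℝ)..1, Real.exp (-u ^ 2) := by
  have split : (∫ x in Set.Ioi (0:ℝ), Real.exp (-x ^ 2))
      = (∫ u in (0:ℝ)..1, Real.exp (-u ^ 2)) + ∫ x in Set.Ioi (1:ℝ), Real.exp (-x ^ 2) := by
    rw [intervalIntegral.integral_of_le zero_le_one]
    have hU : Set.Ioi (0:ℝ) = Set.Ioc 0 1 ∪ Set.Ioi 1 :=
      (Set.Ioc_union_Ioi_eq_Ioi zero_le_one).symm
    rw [hU, setIntegral_union (Set.Ioc_disjoint_Ioi le_rfl) measurableSet_Ioi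
      (gauss_integrable.mono_set (by rw [hU]; exact Set.subset_union_left))
      (gauss_integrable.mono_set (Set.Ioi_subset_Ioi zero_le_one))]
  have := tail_bound
  rw [gauss_Ioi0] at split
  linarith

lemma F_mono {x y : ℝ} (hx : 0 ≤ x) (hxy : x ≤ y) :
    (∫ u in (0:ℝ)..x, Real.exp (-u ^ 2)) ≤ ∫ u in (0:ℝ)..y, Real.exp (-u ^ 2) := by
  rw [← intervalIntegral.integral_add_adjacent_intervals (intble 0 x) (intble x y)]
  have : 0 ≤ ∫ u in x..y, Real.exp (-u ^ 2) :=
    intervalIntegral.integral_nonneg hxy (fun u _ => (Real.exp_pos _).le)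
  linarith

lemma F_nonneg {x : ℝ} (hx : 0 ≤ x) : 0 ≤ ∫ u in (0:ℝ)..x, Real.exp (-u ^ 2) :=
  intervalIntegral.integral_nonneg hx (fun u _ => (Real.exp_pos _).le)

lemma subadd {x y : ℝ} (hx : 0 ≤ x) (hy : 0 ≤ y) (hxy : 1 ≤ x + y) :
    (∫ u in (0:ℝ)..1, Real.exp (-u ^ 2)) ≤
      (∫ u in (0:ℝ)..x, Real.exp (-u ^ 2)) + ∫ u in (0:ℝ)..y, Real.exp (-u ^ 2) := by
  rcases le_or_gt 1 x with h1 | h1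
  · have := F_mono zero_le_one h1
    have := F_nonneg hy
    linarith
  · have hx1 : (∫ u in (0:ℝ)..1, Real.exp (-u ^ 2))
        = (∫ u in (0:ℝ)..x, Real.exp (-u ^ 2)) + ∫ u in x..1, Real.exp (-u ^ 2) :=
      (intervalIntegral.integral_add_adjacent_intervals (intble 0 x) (intble x 1)).symm
    have hshift : (∫ u in x..1, Real.exp (-u ^ 2))
        = ∫ u in (0:ℝ)..(1 - x), Real.exp (-(u + x) ^ 2) := by
      have := intervalIntegral.integral_comp_add_right (a := (0:ℝ)) (b := 1 - x)
        (fun u : ℝ => Real.exp (-u ^ 2)) x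
      rw [this]; norm_num
    have hcomp : (∫ u in (0:ℝ)..(1 - x), Real.exp (-(u + x) ^ 2))
        ≤ ∫ u in (0:ℝ)..(1 - x), Real.exp (-u ^ 2) := by
      apply intervalIntegral.integral_mono_on (by linarith)
        ((cont_gauss.comp (by continuity)).intervalIntegrable _ _) (intble _ _)
      intro u hu
      have h : ((-(u + x) ^ 2 : ℝ)) ≤ -u ^ 2 := by nlinarith [hu.1, hx]
      exact Real.exp_le_exp.mpr h
    have h2 : (∫ u in (0:ℝ)..(1 - x), Real.exp (-u ^ 2))
        ≤ ∫ u in (0:ℝ)..y, Real.exp (-u ^ 2) := F_mono (by linarith) (by linarith)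
    rw [hx1, hshift]
    linarith

theorem inf_ht_on_interval (a b t : ℝ) (ha : 0 ≤ a) (hab : a ≤ b) (ht : 0 < t)
    (htab : 1 ≤ t * (b - a)) :
    (∀ l ∈ Set.Icc a b,
        1 / 2 - Real.exp (-1) / (2 * Real.sqrt π) ≤
          (t / Real.sqrt π) * ∫ ρ in a..b, Real.exp (-t ^ 2 * (l - ρ) ^ 2)) ∧
      (1 : ℝ) / 3 < 1 / 2 - Real.exp (-1) / (2 * Real.sqrt π) := by
  have hsp : 0 < Real.sqrt π := Real.sqrt_pos.mpr Real.pi_pos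
  constructor
  · intro l hl
    obtain ⟨hla, hlb⟩ := hl
    have h1 : (∫ ρ in a..b, Real.exp (-t ^ 2 * (l - ρ) ^ 2))
        = ∫ ρ in a..b, (fun u : ℝ => Real.exp (-(t * u) ^ 2)) (l - ρ) := by
      congr 1; ext ρ; simp only []; ring_nf
    have h2 := intervalIntegral.integral_comp_sub_left (a := a) (b := b)
      (fun u : ℝ => Real.exp (-(t * u) ^ 2)) l
    have h3 := intervalIntegral.integral_comp_mul_left (a := l - b) (b := l - a)
      (f := fun u : ℝ => Real.exp (-u ^ 2)) (ne_of_gt ht)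
    have key : (∫ ρ in a..b, Real.exp (-t ^ 2 * (l - ρ) ^ 2))
        = t⁻¹ * ∫ u in t * (l - b)..t * (l - a), Real.exp (-u ^ 2) := by
      rw [h1, h2]
      calc (∫ u in (l - b)..(l - a), (fun u : ℝ => Real.exp (-(t * u) ^ 2)) u)
          = t⁻¹ • ∫ u in t * (l - b)..t * (l - a), Real.exp (-u ^ 2) := h3
        _ = t⁻¹ * ∫ u in t * (l - b)..t * (l - a), Real.exp (-u ^ 2) := by rw [smul_eq_mul]
    have hlb' : t * (l - b) ≤ 0 := mul_nonpos_of_nonneg_of_nonpos ht.le (by linarith)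
    have hla' : 0 ≤ t * (l - a) := mul_nonneg ht.le (by linarith)
    have hsplit : (∫ u in t * (l - b)..t * (l - a), Real.exp (-u ^ 2))
        = (∫ u in t * (l - b)..(0:ℝ), Real.exp (-u ^ 2))
          + ∫ u in (0:ℝ)..t * (l - a), Real.exp (-u ^ 2) :=
      (intervalIntegral.integral_add_adjacent_intervals (intble _ _) (intble _ _)).symm
    have hneg : (∫ u in t * (l - b)..(0:ℝ), Real.exp (-u ^ 2))
        = ∫ u in (0:ℝ)..t * (b - l), Real.exp (-u ^ 2) := by
      have h := intervalIntegral.integral_comp_neg (a := (0:ℝ)) (b := t * (b - l))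
        (fun u : ℝ => Real.exp (-u ^ 2))
      have e1 : -(t * (b - l)) = t * (l - b) := by ring
      rw [neg_zero, e1] at h
      rw [← h]
      congr 1; ext u; ring_nf
    have hmain : (∫ u in (0:ℝ)..1, Real.exp (-u ^ 2))
        ≤ ∫ u in t * (l - b)..t * (l - a), Real.exp (-u ^ 2) := by
      rw [hsplit, hneg]
      have := subadd hla' (mul_nonneg ht.le (by linarith : (0:ℝ) ≤ b - l)) (by nlinarith)
      linarith
    have hF := F01
    rw [key]
    rw [show (t / Real.sqrt π) * (t⁻¹ * ∫ u in t * (l - b)..t * (l - a), Real.exp (-u ^ 2))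
        = (∫ u in t * (l - b)..t * (l - a), Real.exp (-u ^ 2)) / Real.sqrt π by
      field_simp]
    rw [le_div_iff₀ hsp]
    have hI : Real.sqrt π / 2 - Real.exp (-1) / 2 ≤
        ∫ u in t * (l - b)..t * (l - a), Real.exp (-u ^ 2) := by linarith
    have e : (1 / 2 - Real.exp (-1) / (2 * Real.sqrt π)) * Real.sqrt π
        = Real.sqrt π / 2 - Real.exp (-1) / 2 := by
      field_simp
    rw [e]
    exact hI
  · have h1 : Real.exp (-1) < 0.368 := by
      rw [Real.exp_neg]
      rw [inv_lt_iff_one_lt_mul₀' (Real.exp_pos 1)]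
      nlinarith [Real.exp_one_gt_d9]
    have h2 : (1.7 : ℝ) < Real.sqrt π := by
      have e : (1.7 : ℝ) = Real.sqrt (1.7 ^ 2) := by
        rw [Real.sqrt_sq]; norm_num
      rw [e]
      apply Real.sqrt_lt_sqrt (by norm_num)
      nlinarith [Real.pi_gt_three]
    have h3 : Real.exp (-1) / (2 * Real.sqrt π) < 1 / 6 := by
      rw [div_lt_iff₀ (by linarith : (0:ℝ) < 2 * Real.sqrt π)]
      nlinarith
    linarith
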